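/- Branching rule for twisted representations of gl(k) (character form): let k ≥ 2 and let λ be a strict partition with k parts. Then s_{λ−δ_k}(x_1,…,x_{k−1},1)·s_{δ_k}(x_1,…,x_{k−1},1) = Σ_ν 2^{∇(λ,ν)} · s_{ν−δ_{k−1}}(x_1,…,x_{k−1})·s_{δ_{k−1}}(x_1,…,x_{k−1}), where the sum is over strict partitions ν with k−1 parts such that ν interlaces λ. -/

import Mathlib

open MvPolynomial

/-- The alternant `det(x_i^{μ_j})_{i,j} = Σ_ω sgn(ω) Π_j x_{ω(j)}^{μ_j}`. -/
noncomputable def alt (k : ℕ) (μ : Fin k → ℕ) : MvPolynomial (Fin k) ℤ :=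
  ∑ ω : Equiv.Perm (Fin k), (Equiv.Perm.sign ω : ℤ) • ∏ j : Fin k, (X (ω j)) ^ (μ j)

/-- `p` is the Schur polynomial `s_λ(x_1, …, x_k)`, characterized by
`p · det(x_i^{k-j}) = det(x_i^{λ_j + k - j})`. -/
def IsSchur (k : ℕ) (lam : Fin k → ℕ) (p : MvPolynomial (Fin k) ℤ) : Prop :=
  p * alt k (fun i => k - 1 - (i : ℕ)) = alt k (fun j => lam j + (k - 1 - (j : ℕ)))


open Matrix Finset


variable {R : Type*} [CommRing R] {m : ℕ}

theorem det_colDiff (A : Matrix (Fin (m+1)) (Fin (m+1)) R) :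
    A.det = Matrix.det (Matrix.of fun i j : Fin (m+1) =>
      if h : (j:ℕ) < m then A i j - A i ⟨(j:ℕ)+1, Nat.succ_lt_succ h⟩ else A i j) := by
  set T : Matrix (Fin (m+1)) (Fin (m+1)) R :=
    Matrix.of fun i j => if i = j then (1:R) else if (i:ℕ) = (j:ℕ)+1 then -1 else 0 with hT
  have hdetT : T.det = 1 := by
    have htri : T.BlockTriangular OrderDual.toDual := by
      intro i j hij
      have hij' : (i:ℕ) < (j:ℕ) := hij
      simp only [hT, Matrix.of_apply]
      rw [if_neg (by exact fun h => by simp [h] at hij'), if_neg (by omega)]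
    rw [Matrix.det_of_lowerTriangular T htri]
    simp [hT]
  have hmul : A * T = Matrix.of fun i j : Fin (m+1) =>
      if h : (j:ℕ) < m then A i j - A i ⟨(j:ℕ)+1, Nat.succ_lt_succ h⟩ else A i j := by
    ext i j
    rw [Matrix.mul_apply]
    have hsplit : ∀ k : Fin (m+1), A i k * T k j
        = (if k = j then A i k else 0) + (if (k:ℕ) = (j:ℕ)+1 then -A i k else 0) := by
      intro k
      simp only [hT, Matrix.of_apply]
      by_cases h1 : k = j
      · have h2 : ¬ ((k:ℕ) = (j:ℕ)+1) := by subst h1; omega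
        simp [h1, h2]
      · have h1' : ¬ ((k:ℕ) = (j:ℕ)) := fun h => h1 (Fin.ext h)
        by_cases h2 : (k:ℕ) = (j:ℕ)+1
        · simp [h1, h2]
        · simp [h1, h2]
    rw [Finset.sum_congr rfl (fun k _ => hsplit k), Finset.sum_add_distrib]
    rw [Finset.sum_ite_eq' Finset.univ j (fun k => A i k)]
    simp only [Finset.mem_univ, if_true]
    by_cases h : (j:ℕ) < m
    · have : (fun k : Fin (m+1) => if (k:ℕ) = (j:ℕ)+1 then -A i k else 0)
          = fun k => if k = ⟨(j:ℕ)+1, Nat.succ_lt_succ h⟩ then -A i k else 0 := by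
        funext k
        congr 1
        simp [Fin.ext_iff]
      rw [this, Finset.sum_ite_eq' Finset.univ _ (fun k => -A i k)]
      simp only [Finset.mem_univ, if_true, Matrix.of_apply, dif_pos h]
      ring
    · have hj : (j:ℕ) = m := by omega
      have : ∀ k : Fin (m+1), (if (k:ℕ) = (j:ℕ)+1 then -A i k else 0) = 0 := by
        intro k
        rw [if_neg]
        omega
      rw [Finset.sum_congr rfl (fun k _ => this k), Finset.sum_const_zero]
      simp only [Matrix.of_apply, dif_neg h]
      ring
  calc A.det = (A * T).det := by rw [Matrix.det_mul, hdetT, mul_one]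
    _ = _ := by rw [hmul]

theorem det_lastRow (A : Matrix (Fin (m+1)) (Fin (m+1)) R)
    (h : ∀ j : Fin (m+1), j ≠ Fin.last m → A (Fin.last m) j = 0) :
    A.det = A (Fin.last m) (Fin.last m) * (A.submatrix Fin.castSucc Fin.castSucc).det := by
  rw [Matrix.det_succ_row A (Fin.last m)]
  rw [Finset.sum_eq_single (Fin.last m)]
  · rw [Fin.succAbove_last]
    have : (-1 : R) ^ ((Fin.last m : ℕ) + (Fin.last m : ℕ)) = 1 := by
      rw [← two_mul, pow_mul]
      simp
    rw [this, one_mul]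
  · intro j _ hj
    rw [h j hj]
    ring
  · simp

theorem geom_Icc (x : R) (b a : ℕ) (h : b ≤ a) :
    (∑ t ∈ Finset.Icc b a, x ^ t) * (x - 1) = x ^ (a+1) - x ^ b := by
  have hset : Finset.Icc b a = Finset.range (a+1) \ Finset.range b := by
    ext t; simp; omega
  rw [hset, Finset.sum_sdiff_eq_sub (by intro t ht; simp at ht ⊢; omega)]
  rw [sub_mul, geom_sum_mul, geom_sum_mul]
  ring

theorem geom_Ioo (x : R) (b a : ℕ) (h : b < a) :
    (∑ t ∈ Finset.Ioo b a, x ^ t) * (x - 1) = x ^ a - x ^ (b+1) := by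
  have hset : Finset.Ioo b a = Finset.range a \ Finset.range (b+1) := by
    ext t; simp; omega
  rw [hset, Finset.sum_sdiff_eq_sub (by intro t ht; simp at ht ⊢; omega)]
  rw [sub_mul, geom_sum_mul, geom_sum_mul]
  ring

theorem entry_identity (x : R) (b a : ℕ) (h : b < a) :
    (x - 1) * (∑ t ∈ Finset.Icc b a, (if b < t ∧ t < a then (2:R) else 1) * x ^ t)
      = (x + 1) * x ^ a - (x + 1) * x ^ b := by
  have hsplit : ∀ t, (if b < t ∧ t < a then (2:R) else 1) * x ^ t
      = x ^ t + (if b < t ∧ t < a then (1:R) else 0) * x ^ t := by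
    intro t
    by_cases ht : b < t ∧ t < a <;> simp [ht] <;> ring
  rw [Finset.sum_congr rfl (fun t _ => hsplit t), Finset.sum_add_distrib]
  have h2 : ∑ t ∈ Finset.Icc b a, (if b < t ∧ t < a then (1:R) else 0) * x ^ t
      = ∑ t ∈ Finset.Ioo b a, x ^ t := by
    rw [Finset.sum_congr rfl (fun t _ => by rw [ite_mul, one_mul, zero_mul]),
      ← Finset.sum_filter]
    congr 1
    ext t
    simp only [Finset.mem_filter, Finset.mem_Icc, Finset.mem_Ioo]
    omega
  rw [mul_comm, add_mul, geom_Icc x b a (le_of_lt h), h2, geom_Ioo x b a h]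
  ring

theorem det_pow_sum {m : ℕ} (v : Fin m → R) (S : Fin m → Finset ℕ) (c : Fin m → ℕ → R) :
    Matrix.det (Matrix.of fun i j : Fin m => ∑ t ∈ S j, c j t * v i ^ t)
      = ∑ ν ∈ Fintype.piFinset S, (∏ j, c j (ν j)) *
          Matrix.det (Matrix.of fun i j : Fin m => v i ^ ν j) := by
  simp only [Matrix.det_apply, Matrix.of_apply]
  have key : ∀ σ : Equiv.Perm (Fin m),
      (Equiv.Perm.sign σ) • ∏ j, (∑ t ∈ S j, c j t * v (σ j) ^ t)
        = ∑ ν ∈ Fintype.piFinset S, (∏ j, c j (ν j)) *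
            ((Equiv.Perm.sign σ) • ∏ j, v (σ j) ^ ν j) := by
    intro σ
    rw [Finset.prod_univ_sum]
    rw [Finset.smul_sum]
    refine Finset.sum_congr rfl fun ν _ => ?_
    rw [Finset.prod_mul_distrib, mul_smul_comm]
  rw [Finset.sum_congr rfl (fun σ _ => key σ), Finset.sum_comm]
  refine Finset.sum_congr rfl fun ν _ => ?_
  rw [Finset.mul_sum]

noncomputable def gv {m : ℕ} (v : Fin m → R) : Fin (m+1) → R :=
  fun i => if h : (i:ℕ) < m then v ⟨(i:ℕ), h⟩ else 1

theorem gv_castSucc {m : ℕ} (v : Fin m → R) (i : Fin m) : gv v i.castSucc = v i := by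
  simp [gv]

theorem gv_last {m : ℕ} (v : Fin m → R) : gv v (Fin.last m) = 1 := by
  simp [gv]

theorem core_lemma {m : ℕ} (v : Fin m → R) (lam : Fin (m+1) → ℕ)
    (hstrict : ∀ i j : Fin (m+1), i < j → lam j < lam i) :
    (Matrix.of fun i j : Fin (m+1) => gv v i ^ lam j).det * ∏ i : Fin m, (v i + 1)
    = (Matrix.of fun i j : Fin m => ∑ t ∈ Finset.Icc (lam j.succ) (lam j.castSucc),
        (if lam j.succ < t ∧ t < lam j.castSucc then (2:R) else 1) * v i ^ t).det
      * ∏ i : Fin m, (v i - 1) := by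
  set w : Fin (m+1) → R := fun i => if h : (i:ℕ) < m then v ⟨(i:ℕ), h⟩ + 1 else 1 with hw
  have hprodw : ∏ i : Fin (m+1), w i = ∏ i : Fin m, (v i + 1) := by
    rw [Fin.prod_univ_castSucc]
    have h1 : w (Fin.last m) = 1 := by simp [hw]
    have h2 : ∀ i : Fin m, w i.castSucc = v i + 1 := by intro i; simp [hw]
    rw [h1, mul_one]
    exact Finset.prod_congr rfl fun i _ => h2 i
  -- Step 1 : row scaling
  have step1 : (Matrix.of fun i j : Fin (m+1) => gv v i ^ lam j).det * ∏ i : Fin m, (v i + 1)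
      = (Matrix.of fun i j : Fin (m+1) => w i * gv v i ^ lam j).det := by
    rw [← hprodw]
    exact (mul_comm _ _).trans (Matrix.det_mul_column w _).symm
  set E : Matrix (Fin (m+1)) (Fin (m+1)) R := Matrix.of fun i j => w i * gv v i ^ lam j with hE
  -- Step 2 : column differences
  set N : Matrix (Fin (m+1)) (Fin (m+1)) R := Matrix.of fun i j =>
    if h : (j:ℕ) < m then E i j - E i ⟨(j:ℕ)+1, Nat.succ_lt_succ h⟩ else E i j with hN
  have step2 : E.det = N.det := det_colDiff E
  -- Step 3 : expand along last row
  have hlastzero : ∀ j : Fin (m+1), j ≠ Fin.last m → N (Fin.last m) j = 0 := by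
    intro j hj
    have hjm : (j:ℕ) < m := by
      have := j.isLt
      have : (j:ℕ) ≠ m := fun h => hj (Fin.ext (by simp [h, Fin.last]))
      omega
    have hwl : w (Fin.last m) = 1 := by simp [hw]
    have hgl : gv v (Fin.last m) = 1 := gv_last v
    simp only [hN, Matrix.of_apply, dif_pos hjm, hE, hwl, hgl, one_pow, mul_one]
    ring
  have hlastone : N (Fin.last m) (Fin.last m) = 1 := by
    have hm : ¬ ((Fin.last m : ℕ) < m) := by simp [Fin.last]
    have hwl : w (Fin.last m) = 1 := by simp [hw]
    simp only [hN, Matrix.of_apply, dif_neg hm, hE, hwl, gv_last, one_pow, mul_one]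
  have step3 : N.det = (N.submatrix Fin.castSucc Fin.castSucc).det := by
    rw [det_lastRow N hlastzero, hlastone, one_mul]
  -- Step 4 : identify the submatrix
  have hsub : ∀ i j : Fin m, N.submatrix Fin.castSucc Fin.castSucc i j
      = (v i - 1) * ∑ t ∈ Finset.Icc (lam j.succ) (lam j.castSucc),
          (if lam j.succ < t ∧ t < lam j.castSucc then (2:R) else 1) * v i ^ t := by
    intro i j
    have hjm : ((j.castSucc : Fin (m+1)) : ℕ) < m := j.isLt
    have hjsucc : (⟨((j.castSucc : Fin (m+1)) : ℕ) + 1, Nat.succ_lt_succ hjm⟩ : Fin (m+1)) = j.succ := by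
      apply Fin.ext; simp
    have hwc : w j.castSucc = v j + 1 := by simp [hw]
    have hlt : lam j.succ < lam j.castSucc :=
      hstrict j.castSucc j.succ Fin.castSucc_lt_succ
    have := entry_identity (v i) (lam j.succ) (lam j.castSucc) hlt
    simp only [Matrix.submatrix_apply, hN, Matrix.of_apply, dif_pos hjm, hjsucc, hE]
    have hwic : w i.castSucc = v i + 1 := by simp [hw]
    rw [hwic, gv_castSucc, this]
  have step4 : (N.submatrix Fin.castSucc Fin.castSucc).det
      = (∏ i : Fin m, (v i - 1)) *
        (Matrix.of fun i j : Fin m => ∑ t ∈ Finset.Icc (lam j.succ) (lam j.castSucc),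
          (if lam j.succ < t ∧ t < lam j.castSucc then (2:R) else 1) * v i ^ t).det := by
    rw [show N.submatrix Fin.castSucc Fin.castSucc
        = Matrix.of fun i j : Fin m => (v i - 1) *
          ((Matrix.of fun i j : Fin m => ∑ t ∈ Finset.Icc (lam j.succ) (lam j.castSucc),
            (if lam j.succ < t ∧ t < lam j.castSucc then (2:R) else 1) * v i ^ t) i j) from by
      ext i j; exact hsub i j]
    exact Matrix.det_mul_column _ _
  rw [step1, step2, step3, step4]
  ring

theorem det_rev_pow_eq (v : Fin m → R) :
    (Matrix.of fun i j : Fin m => v i ^ (m - 1 - (j:ℕ))).det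
      = (Equiv.Perm.sign (Fin.revPerm : Equiv.Perm (Fin m)) : ℤ) •
          (Matrix.vandermonde v).det := by
  have h : (Matrix.of fun i j : Fin m => v i ^ (m - 1 - (j:ℕ)))
      = (Matrix.vandermonde v).submatrix id (Fin.revPerm : Equiv.Perm (Fin m)) := by
    ext i j
    simp [Matrix.vandermonde, Fin.val_rev]
    congr 1
    omega
  rw [h, Matrix.det_permute']
  simp [Units.smul_def]

theorem det_rev_pow_sq (v : Fin m → R) :
    (Matrix.of fun i j : Fin m => v i ^ (2 * (m - 1 - (j:ℕ)))).det
      = (Matrix.of fun i j : Fin m => v i ^ (m - 1 - (j:ℕ))).det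
        * ∏ i : Fin m, ∏ j ∈ Finset.Ioi i, (v j + v i) := by
  have h1 : (Matrix.of fun i j : Fin m => v i ^ (2 * (m - 1 - (j:ℕ))))
      = (Matrix.of fun i j : Fin m => (fun x => v x ^ 2) i ^ (m - 1 - (j:ℕ))) := by
    ext i j
    simp only [Matrix.of_apply]
    rw [← pow_mul]
  rw [h1, det_rev_pow_eq (fun x => v x ^ 2), det_rev_pow_eq v]
  rw [Matrix.det_vandermonde, Matrix.det_vandermonde]
  have h2 : ∏ i : Fin m, ∏ j ∈ Finset.Ioi i, (v j ^ 2 - v i ^ 2)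
      = (∏ i : Fin m, ∏ j ∈ Finset.Ioi i, (v j - v i))
        * ∏ i : Fin m, ∏ j ∈ Finset.Ioi i, (v j + v i) := by
    rw [← Finset.prod_mul_distrib]
    refine Finset.prod_congr rfl fun i _ => ?_
    rw [← Finset.prod_mul_distrib]
    refine Finset.prod_congr rfl fun j _ => ?_
    ring
  rw [h2, smul_mul_assoc]

theorem prod_pairs_gv (v : Fin m → R) :
    ∏ i : Fin (m+1), ∏ j ∈ Finset.Ioi i, (gv v j + gv v i)
      = (∏ i : Fin m, ∏ j ∈ Finset.Ioi i, (v j + v i)) * ∏ i : Fin m, (v i + 1) := by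
  have hIoi : ∀ i : Fin m, Finset.Ioi (i.castSucc)
      = insert (Fin.last m) ((Finset.Ioi i).map Fin.castSuccEmb) := by
    intro i
    ext j
    simp only [Finset.mem_Ioi, Finset.mem_insert, Finset.mem_map]
    constructor
    · intro hj
      by_cases hl : j = Fin.last m
      · exact Or.inl hl
      · refine Or.inr ⟨⟨(j:ℕ), ?_⟩, ?_, ?_⟩
        · have h1 := j.isLt
          have h2 : (j:ℕ) ≠ m := fun h => hl (Fin.ext (by simpa [Fin.last] using h))
          omega
        · have : (i.castSucc : ℕ) < (j:ℕ) := hj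
          exact Fin.mk_lt_mk.mpr (by simpa using this)
        · exact Fin.ext (by simp)
    · rintro (rfl | ⟨a, ha, rfl⟩)
      · exact Fin.castSucc_lt_last i
      · exact Fin.castSucc_lt_castSucc_iff.mpr ha
  rw [Fin.prod_univ_castSucc]
  have hlast : ∏ j ∈ Finset.Ioi (Fin.last m), (gv v j + gv v (Fin.last m)) = 1 := by
    rw [show Finset.Ioi (Fin.last m) = (∅ : Finset (Fin (m+1))) from by
      ext j; simp [Fin.lt_iff_val_lt_val, Fin.last]; omega]
    simp
  rw [hlast, mul_one]
  have hinner : ∀ i : Fin m, ∏ j ∈ Finset.Ioi (i.castSucc), (gv v j + gv v i.castSucc)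
      = (v i + 1) * ∏ j ∈ Finset.Ioi i, (v j + v i) := by
    intro i
    rw [hIoi i, Finset.prod_insert (by
      simp only [Finset.mem_map]
      rintro ⟨a, _, ha⟩
      exact absurd (congrArg Fin.val ha) (by simp [Fin.last]; omega))]
    rw [Finset.prod_map]
    rw [gv_last, gv_castSucc]
    have : ∀ a : Fin m, gv v (Fin.castSuccEmb a) + v i = v a + v i := by
      intro a
      rw [show (Fin.castSuccEmb a : Fin (m+1)) = a.castSucc from rfl, gv_castSucc]
    rw [Finset.prod_congr rfl (fun a _ => this a)]
    ring
  rw [Finset.prod_congr rfl (fun i _ => hinner i), Finset.prod_mul_distrib]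
  ring

open MvPolynomial in
theorem coeff_one_single {σ : Type*} (i : σ) :
    MvPolynomial.coeff (Finsupp.single i 1) (1 : MvPolynomial σ ℤ) = 0 := by
  classical
  rw [← MvPolynomial.C_1, MvPolynomial.coeff_C, if_neg]
  intro heq
  have := congrArg (fun f : σ →₀ ℕ => f i) heq
  simp at this

open MvPolynomial in
theorem X_add_one_ne_zero {σ : Type*} (i : σ) : (X i + 1 : MvPolynomial σ ℤ) ≠ 0 := by
  intro h
  have h0 := congrArg (MvPolynomial.coeff (Finsupp.single i 1)) h
  simp only [MvPolynomial.coeff_add, MvPolynomial.coeff_zero, MvPolynomial.coeff_X,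
    coeff_one_single] at h0
  simp [MvPolynomial.coeff_X] at h0

open MvPolynomial in
theorem X_sub_one_ne_zero {σ : Type*} (i : σ) : (X i - 1 : MvPolynomial σ ℤ) ≠ 0 := by
  intro h
  have h0 := congrArg (MvPolynomial.coeff (Finsupp.single i 1)) h
  simp only [MvPolynomial.coeff_sub, MvPolynomial.coeff_zero, MvPolynomial.coeff_X,
    coeff_one_single] at h0
  simp [MvPolynomial.coeff_X] at h0

open MvPolynomial in
theorem X_sub_X_ne_zero {σ : Type*} {i j : σ} (h : i ≠ j) :
    (X j - X i : MvPolynomial σ ℤ) ≠ 0 := by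
  intro h0
  exact h (MvPolynomial.X_injective (sub_eq_zero.mp h0)).symm


open MvPolynomial in
theorem alt_eq_det (k : ℕ) (μ : Fin k → ℕ) :
    alt k μ = (Matrix.of fun i j : Fin k => (X i : MvPolynomial (Fin k) ℤ) ^ μ j).det := by
  rw [Matrix.det_apply]
  unfold alt
  refine Finset.sum_congr rfl fun σ _ => ?_
  rw [Units.smul_def]
  norm_num

open MvPolynomial in
theorem map_alt {S : Type*} [CommRing S] (k : ℕ) (f : MvPolynomial (Fin k) ℤ →+* S)
    (μ : Fin k → ℕ) :
    f (alt k μ) = (Matrix.of fun i j : Fin k => f (X i) ^ μ j).det := by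
  rw [alt_eq_det, RingHom.map_det]
  congr 1
  ext i j
  simp [Matrix.map_apply]

theorem strict_bound {m : ℕ} (f : Fin m → ℕ) (hf : ∀ i j : Fin m, i < j → f j < f i) :
    ∀ i j : Fin m, i ≤ j → f j + ((j:ℕ) - (i:ℕ)) ≤ f i := by
  have key : ∀ d : ℕ, ∀ i j : Fin m, (j:ℕ) = (i:ℕ) + d → f j + d ≤ f i := by
    intro d
    induction d with
    | zero => intro i j h; have : j = i := Fin.ext (by omega); subst this; omega
    | succ d ih =>
      intro i j h
      have hd : (i:ℕ) + d < m := by have := j.isLt; omega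
      have h1 : f j < f ⟨(i:ℕ) + d, hd⟩ := by
        apply hf
        rw [Fin.lt_iff_val_lt_val]
        simp
        omega
      have h2 := ih i ⟨(i:ℕ) + d, hd⟩ (by simp)
      omega
  intro i j hij
  have := key ((j:ℕ) - (i:ℕ)) i j (by have : (i:ℕ) ≤ (j:ℕ) := hij; omega)
  omega

theorem det_pow_zero_of_eq {m : ℕ} (v : Fin m → R) {μ : Fin m → ℕ} {a b : Fin m}
    (hab : a ≠ b) (h : μ a = μ b) :
    (Matrix.of fun i j : Fin m => v i ^ μ j).det = 0 :=
  Matrix.det_zero_of_column_eq hab (fun k => by simp [h])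

theorem prod_ite_two {m : ℕ} (p : Fin m → Prop) [DecidablePred p] :
    (∏ j : Fin m, (if p j then (2:R) else 1))
      = (2:R) ^ (Finset.univ.filter p).card := by
  rw [Finset.prod_ite, Finset.prod_const, Finset.prod_const, one_pow, mul_one]

/-- Branching rule for twisted representations of `gl(k)` (character form), with
`k = n + 1 ≥ 2`: setting `x_k = 1` in `s_{λ-δ_k} · s_{δ_k}` gives
`Σ_ν 2^{∇(λ,ν)} s_{ν-δ_{k-1}} · s_{δ_{k-1}}`, the sum over strict partitions `ν`
with `k-1` parts interlacing `λ`; here `∇(λ,ν) = #{i : λ_i > ν_i > λ_{i+1}}`. -/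
theorem twisted_branching_rule (n : ℕ) (hn : 1 ≤ n) (lam : Fin (n + 1) → ℕ)
    (hstrict : ∀ i j : Fin (n + 1), i < j → lam j < lam i)
    (p q : MvPolynomial (Fin (n + 1)) ℤ)
    (hp : IsSchur (n + 1) (fun i => lam i - (n - (i : ℕ))) p)
    (hq : IsSchur (n + 1) (fun i => n - (i : ℕ)) q)
    (s : (Fin n → ℕ) → MvPolynomial (Fin n) ℤ)
    (hs : ∀ μ : Fin n → ℕ, (∀ i j : Fin n, i ≤ j → μ j ≤ μ i) → IsSchur n μ (s μ)) :
    MvPolynomial.aeval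
        (fun j : Fin (n + 1) =>
          if h : (j : ℕ) < n then (X ⟨(j : ℕ), h⟩ : MvPolynomial (Fin n) ℤ) else 1)
        (p * q) =
      ∑ᶠ ν : {ν : Fin n → ℕ //
          (∀ i j : Fin n, i < j → ν j < ν i) ∧
          ∀ i : Fin n, lam i.succ ≤ ν i ∧ ν i ≤ lam i.castSucc},
        ((2 : ℤ) ^ (Finset.univ.filter
            (fun i : Fin n => lam i.succ < ν.1 i ∧ ν.1 i < lam i.castSucc)).card) •
          (s (fun i => ν.1 i - (n - 1 - (i : ℕ))) * s (fun i => n - 1 - (i : ℕ))) := by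
  classical
  set g : Fin (n+1) → MvPolynomial (Fin n) ℤ := gv (fun i => X i) with hg
  set φ : MvPolynomial (Fin (n+1)) ℤ →+* MvPolynomial (Fin n) ℤ :=
    (MvPolynomial.aeval g : MvPolynomial (Fin (n+1)) ℤ →ₐ[ℤ] MvPolynomial (Fin n) ℤ).toRingHom
    with hφdef
  have hφX : ∀ i : Fin (n+1), φ (X i) = g i := by
    intro i
    simp [hφdef]
  set G : (Fin (n+1) → ℕ) → MvPolynomial (Fin n) ℤ :=
    fun μ => (Matrix.of fun i j : Fin (n+1) => g i ^ μ j).det with hG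
  set B : (Fin n → ℕ) → MvPolynomial (Fin n) ℤ :=
    fun μ => (Matrix.of fun i j : Fin n => (X i : MvPolynomial (Fin n) ℤ) ^ μ j).det with hB
  have hφalt : ∀ μ : Fin (n+1) → ℕ, φ (alt (n+1) μ) = G μ := by
    intro μ
    rw [map_alt (n+1) φ μ]
    simp only [hG]
    congr 1
    ext i j
    simp only [Matrix.of_apply]
    rw [hφX]
  set Bδ : MvPolynomial (Fin n) ℤ := B (fun j => n - 1 - (j:ℕ)) with hBδ
  set P : MvPolynomial (Fin n) ℤ := ∏ i : Fin n, (X i + 1) with hP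
  set M : MvPolynomial (Fin n) ℤ := ∏ i : Fin n, (X i - 1) with hM
  set W : MvPolynomial (Fin n) ℤ :=
    ∏ i : Fin n, ∏ j ∈ Finset.Ioi i, (X j + X i) with hW
  set Gδ : MvPolynomial (Fin n) ℤ := G (fun j => n - (j:ℕ)) with hGδ
  have hlam_ge : ∀ j : Fin (n+1), n - (j:ℕ) ≤ lam j := by
    intro j
    have h0 := strict_bound lam hstrict j (Fin.last n) (Fin.le_last j)
    simp [Fin.last] at h0
    omega
  have hA : φ p * Gδ = G lam := by
    have e2 : (fun j : Fin (n+1) => (lam j - (n - (j:ℕ))) + (n - (j:ℕ))) = lam :=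
      funext fun j => by have := hlam_ge j; omega
    have hp2 : p * alt (n+1) (fun i => n - (i:ℕ)) = alt (n+1) lam :=
      (hp : p * alt (n+1) (fun i => n - (i:ℕ))
        = alt (n+1) (fun j => (lam j - (n - (j:ℕ))) + (n - (j:ℕ)))).trans
        (congrArg (alt (n+1)) e2)
    have h3 := congrArg φ hp2
    rw [_root_.map_mul, hφalt, hφalt] at h3
    exact h3
  have hBq : φ q * Gδ = G (fun j => 2 * (n - (j:ℕ))) := by
    have e2 : (fun j : Fin (n+1) => ((n - (j:ℕ)) + (n - (j:ℕ))))
        = (fun j : Fin (n+1) => 2 * (n - (j:ℕ))) :=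
      funext fun j => by omega
    have hq2 : q * alt (n+1) (fun i => n - (i:ℕ)) = alt (n+1) (fun j => 2 * (n - (j:ℕ))) :=
      (hq : q * alt (n+1) (fun i => n - (i:ℕ))
        = alt (n+1) (fun j => (n - (j:ℕ)) + (n - (j:ℕ)))).trans
        (congrArg (alt (n+1)) e2)
    have h3 := congrArg φ hq2
    rw [_root_.map_mul, hφalt, hφalt] at h3
    exact h3
  have hL1 : G (fun j => 2 * (n - (j:ℕ))) = Gδ * (W * P) := by
    have h0 : (Matrix.of fun i j : Fin (n+1) => g i ^ (2 * (n - (j:ℕ)))).det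
        = (Matrix.of fun i j : Fin (n+1) => g i ^ (n - (j:ℕ))).det
          * ∏ i : Fin (n+1), ∏ j ∈ Finset.Ioi i, (g j + g i) :=
      det_rev_pow_sq (gv (fun i : Fin n => (X i : MvPolynomial (Fin n) ℤ)))
    have h1 : (∏ i : Fin (n+1), ∏ j ∈ Finset.Ioi i, (g j + g i)) = W * P := by
      simp only [hg, hW, hP]
      exact prod_pairs_gv (fun i : Fin n => (X i : MvPolynomial (Fin n) ℤ))
    simp only [hGδ, hG]
    rw [h0, h1]
  have hL2 : B (fun j => 2 * (n - 1 - (j:ℕ))) = Bδ * W := by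
    have h0 : (Matrix.of fun i j : Fin n => (X i : MvPolynomial (Fin n) ℤ)
          ^ (2 * (n - 1 - (j:ℕ)))).det
        = (Matrix.of fun i j : Fin n => (X i : MvPolynomial (Fin n) ℤ) ^ (n - 1 - (j:ℕ))).det
          * W := by
      have h2 := det_rev_pow_sq (fun i : Fin n => (X i : MvPolynomial (Fin n) ℤ))
      simp only [hW]
      exact h2
    simp only [hBδ, hB]
    rw [h0]
  set D : MvPolynomial (Fin n) ℤ :=
    (Matrix.of fun i j : Fin n => ∑ t ∈ Finset.Icc (lam j.succ) (lam j.castSucc),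
      (if lam j.succ < t ∧ t < lam j.castSucc then (2 : MvPolynomial (Fin n) ℤ) else 1)
        * (X i : MvPolynomial (Fin n) ℤ) ^ t).det with hD
  have hC1 : G lam * P = D * M := by
    have h0 := core_lemma (fun i : Fin n => (X i : MvPolynomial (Fin n) ℤ)) lam hstrict
    simp only [hg, hG, hP, hD, hM]
    exact h0
  have hBδ_ne : Bδ ≠ 0 := by
    have h0 := det_rev_pow_eq (fun i : Fin n => (X i : MvPolynomial (Fin n) ℤ))
    simp only [hBδ, hB]
    rw [h0, Matrix.det_vandermonde]
    have hprod : (∏ i : Fin n, ∏ j ∈ Finset.Ioi i,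
        ((X j : MvPolynomial (Fin n) ℤ) - X i)) ≠ 0 := by
      apply Finset.prod_ne_zero_iff.mpr
      intro i _
      apply Finset.prod_ne_zero_iff.mpr
      intro j hj
      exact X_sub_X_ne_zero (ne_of_lt (Finset.mem_Ioi.mp hj))
    rcases Int.units_eq_one_or (Equiv.Perm.sign (Fin.revPerm : Equiv.Perm (Fin n))) with h | h
      <;> rw [h]
    · simpa using hprod
    · simpa using hprod
  have hP_ne : P ≠ 0 := by
    simp only [hP]
    exact Finset.prod_ne_zero_iff.mpr (fun i _ => X_add_one_ne_zero i)
  have hM_ne : M ≠ 0 := by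
    simp only [hM]
    exact Finset.prod_ne_zero_iff.mpr (fun i _ => X_sub_one_ne_zero i)
  have hC2 : Gδ = Bδ * M := by
    have h0 := core_lemma (fun i : Fin n => (X i : MvPolynomial (Fin n) ℤ))
      (fun j => n - (j:ℕ)) (by
        intro i j hij
        show n - (j:ℕ) < n - (i:ℕ)
        have h1 : (i:ℕ) < (j:ℕ) := hij
        have h2 := j.isLt
        omega)
    have hmat : (Matrix.of fun i j : Fin n => ∑ t ∈ Finset.Icc
          ((fun j : Fin (n+1) => n - (j:ℕ)) j.succ) ((fun j : Fin (n+1) => n - (j:ℕ)) j.castSucc),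
        (if (fun j : Fin (n+1) => n - (j:ℕ)) j.succ < t
            ∧ t < (fun j : Fin (n+1) => n - (j:ℕ)) j.castSucc
          then (2 : MvPolynomial (Fin n) ℤ) else 1) * (X i : MvPolynomial (Fin n) ℤ) ^ t)
        = (Matrix.of fun i j : Fin n => ((X i : MvPolynomial (Fin n) ℤ) + 1)
            * (X i : MvPolynomial (Fin n) ℤ) ^ (n - 1 - (j:ℕ))) := by
      ext i j
      simp only [Matrix.of_apply, Fin.val_succ, Fin.coe_castSucc]
      have hj := j.isLt
      have hIcc : Finset.Icc (n - ((j:ℕ)+1)) (n - (j:ℕ)) = {n - 1 - (j:ℕ), n - (j:ℕ)} := by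
        ext t; simp [Finset.mem_Icc, Finset.mem_insert]; omega
      rw [hIcc, Finset.sum_pair (by omega : n - 1 - (j:ℕ) ≠ n - (j:ℕ))]
      rw [if_neg (by omega), if_neg (by omega), one_mul, one_mul]
      have hnj : n - (j:ℕ) = (n - 1 - (j:ℕ)) + 1 := by omega
      rw [hnj, pow_succ]
      ring
    rw [hmat] at h0
    have hdet2 : (Matrix.of fun i j : Fin n => ((X i : MvPolynomial (Fin n) ℤ) + 1)
          * (X i : MvPolynomial (Fin n) ℤ) ^ (n - 1 - (j:ℕ))).det
        = (∏ i : Fin n, ((X i : MvPolynomial (Fin n) ℤ) + 1))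
          * (Matrix.of fun i j : Fin n =>
              (X i : MvPolynomial (Fin n) ℤ) ^ (n - 1 - (j:ℕ))).det :=
      Matrix.det_mul_column _ _
    rw [hdet2] at h0
    have h1 : Gδ * P = Bδ * M * P := by
      simp only [hGδ, hG, hBδ, hB, hP, hM, hg]
      rw [h0]
      ring
    exact mul_right_cancel₀ hP_ne h1
  have hGδ_ne : Gδ ≠ 0 := by
    rw [hC2]; exact mul_ne_zero hBδ_ne hM_ne
  set box : Finset (Fin n → ℕ) :=
    Fintype.piFinset (fun j : Fin n => Finset.Icc (lam j.succ) (lam j.castSucc)) with hbox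
  have hDsum : D = ∑ ν ∈ box,
      (2 : MvPolynomial (Fin n) ℤ) ^ (Finset.univ.filter
        (fun i : Fin n => lam i.succ < ν i ∧ ν i < lam i.castSucc)).card * B ν := by
    rw [hD, det_pow_sum (fun i : Fin n => (X i : MvPolynomial (Fin n) ℤ))
      (fun j => Finset.Icc (lam j.succ) (lam j.castSucc))
      (fun j t => if lam j.succ < t ∧ t < lam j.castSucc
        then (2 : MvPolynomial (Fin n) ℤ) else 1)]
    refine Finset.sum_congr rfl fun ν _ => ?_
    rw [prod_ite_two (fun j : Fin n => lam j.succ < ν j ∧ ν j < lam j.castSucc)]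
    try simp only [hB]
  have hlam_anti : ∀ a b : Fin (n+1), a ≤ b → lam b ≤ lam a := by
    intro a b hab
    rcases eq_or_lt_of_le hab with h | h
    · rw [h]
    · exact le_of_lt (hstrict a b h)
  set sfin : Finset (Fin n → ℕ) :=
    box.filter (fun ν => ∀ i j : Fin n, i < j → ν j < ν i) with hsfin
  have hDsum2 : ∑ ν ∈ box,
      (2 : MvPolynomial (Fin n) ℤ) ^ (Finset.univ.filter
        (fun i : Fin n => lam i.succ < ν i ∧ ν i < lam i.castSucc)).card * B ν
      = ∑ ν ∈ sfin,
      (2 : MvPolynomial (Fin n) ℤ) ^ (Finset.univ.filter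
        (fun i : Fin n => lam i.succ < ν i ∧ ν i < lam i.castSucc)).card * B ν := by
    rw [hsfin]
    refine (Finset.sum_filter_of_ne ?_).symm
    intro ν hν hne
    by_contra hstr
    push_neg at hstr
    obtain ⟨i, j, hij, hle⟩ := hstr
    have hbounds : ∀ a : Fin n, lam a.succ ≤ ν a ∧ ν a ≤ lam a.castSucc := by
      intro a
      have h4 := (Fintype.mem_piFinset.mp hν) a
      simpa [Finset.mem_Icc] using h4
    have hν_anti : ν j ≤ ν i := by
      have h1 : ν j ≤ lam j.castSucc := (hbounds j).2
      have h2 : lam i.succ ≤ ν i := (hbounds i).1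
      have h3 : lam j.castSucc ≤ lam i.succ := by
        apply hlam_anti
        have h5 : (i:ℕ) < (j:ℕ) := hij
        rw [Fin.le_def]
        simp
        omega
      omega
    have heq : ν i = ν j := le_antisymm hle hν_anti
    have hBν : B ν = 0 := by
      rw [hB]
      exact det_pow_zero_of_eq _ (ne_of_lt hij) heq
    rw [hBν, mul_zero] at hne
    exact hne rfl
  have hmem : ∀ ν : Fin n → ℕ, ν ∈ sfin ↔
      ((∀ i j : Fin n, i < j → ν j < ν i) ∧
        ∀ i : Fin n, lam i.succ ≤ ν i ∧ ν i ≤ lam i.castSucc) := by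
    intro ν
    rw [hsfin, Finset.mem_filter, hbox, Fintype.mem_piFinset]
    constructor
    · rintro ⟨h1, h2⟩
      exact ⟨h2, fun i => by simpa [Finset.mem_Icc] using h1 i⟩
    · rintro ⟨h1, h2⟩
      refine ⟨fun i => ?_, h1⟩
      simp only [Finset.mem_Icc]
      exact h2 i
  haveI instF : Fintype {ν : Fin n → ℕ //
      (∀ i j : Fin n, i < j → ν j < ν i) ∧
      ∀ i : Fin n, lam i.succ ≤ ν i ∧ ν i ≤ lam i.castSucc} :=
    Fintype.subtype sfin hmem
  have hgoalRHS : (∑ᶠ ν : {ν : Fin n → ℕ //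
        (∀ i j : Fin n, i < j → ν j < ν i) ∧
        ∀ i : Fin n, lam i.succ ≤ ν i ∧ ν i ≤ lam i.castSucc},
      ((2 : ℤ) ^ (Finset.univ.filter
          (fun i : Fin n => lam i.succ < ν.1 i ∧ ν.1 i < lam i.castSucc)).card) •
        (s (fun i => ν.1 i - (n - 1 - (i : ℕ))) * s (fun i => n - 1 - (i : ℕ))))
      = ∑ ν ∈ sfin, ((2 : ℤ) ^ (Finset.univ.filter
          (fun i : Fin n => lam i.succ < ν i ∧ ν i < lam i.castSucc)).card) •
        (s (fun i => ν i - (n - 1 - (i : ℕ))) * s (fun i => n - 1 - (i : ℕ))) := by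
    rw [finsum_eq_sum_of_fintype]
    exact (Finset.sum_subtype sfin hmem (fun ν => ((2 : ℤ) ^ (Finset.univ.filter
      (fun i : Fin n => lam i.succ < ν i ∧ ν i < lam i.castSucc)).card) •
        (s (fun i => ν i - (n - 1 - (i : ℕ))) * s (fun i => n - 1 - (i : ℕ))))).symm
  have hδ'_anti : ∀ i j : Fin n, i ≤ j → (n - 1 - (j:ℕ)) ≤ (n - 1 - (i:ℕ)) := by
    intro i j hij
    have h1 : (i:ℕ) ≤ (j:ℕ) := hij
    omega
  have hsδ : s (fun i : Fin n => n - 1 - (i:ℕ)) * Bδ = B (fun j => 2 * (n - 1 - (j:ℕ))) := by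
    have e2 : (fun j : Fin n => (n - 1 - (j:ℕ)) + (n - 1 - (j:ℕ)))
        = (fun j : Fin n => 2 * (n - 1 - (j:ℕ))) := by funext j; omega
    have h0 : s (fun i : Fin n => n - 1 - (i:ℕ)) * alt n (fun i => n - 1 - (i:ℕ))
        = alt n (fun j => 2 * (n - 1 - (j:ℕ))) :=
      (hs (fun i : Fin n => n - 1 - (i:ℕ)) hδ'_anti :
        s (fun i : Fin n => n - 1 - (i:ℕ)) * alt n (fun i => n - 1 - (i:ℕ))
          = alt n (fun j => (n - 1 - (j:ℕ)) + (n - 1 - (j:ℕ)))).trans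
        (congrArg (alt n) e2)
    simp only [hBδ, hB, ← alt_eq_det]
    exact h0
  have hterm : ∀ ν ∈ sfin,
      s (fun i => ν i - (n - 1 - (i : ℕ))) * Bδ = B ν := by
    intro ν hν
    rw [hmem] at hν
    obtain ⟨hstr, hbd⟩ := hν
    have hν_ge : ∀ j : Fin n, n - 1 - (j:ℕ) ≤ ν j := by
      intro j
      have h1 := (hbd j).1
      have h2 := hlam_ge j.succ
      have h3 : ((j.succ : Fin (n+1)) : ℕ) = (j:ℕ) + 1 := rfl
      omega
    have hanti : ∀ i j : Fin n, i ≤ j →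
        (ν j - (n - 1 - (j:ℕ))) ≤ (ν i - (n - 1 - (i:ℕ))) := by
      intro i j hij
      have h1 := strict_bound ν hstr i j hij
      have h2 := hν_ge j
      have h3 := hν_ge i
      have h4 : (i:ℕ) ≤ (j:ℕ) := hij
      omega
    have e2 : (fun j : Fin n => (ν j - (n - 1 - (j:ℕ))) + (n - 1 - (j:ℕ))) = ν := by
      funext j; have := hν_ge j; omega
    have h0 : s (fun i => ν i - (n - 1 - (i:ℕ))) * alt n (fun i => n - 1 - (i:ℕ))
        = alt n ν :=
      (hs (fun i => ν i - (n - 1 - (i:ℕ))) hanti :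
        s (fun i => ν i - (n - 1 - (i:ℕ))) * alt n (fun i => n - 1 - (i:ℕ))
          = alt n (fun j => (ν j - (n - 1 - (j:ℕ))) + (n - 1 - (j:ℕ)))).trans
        (congrArg (alt n) e2)
    simp only [hBδ, hB, ← alt_eq_det]
    exact h0
  set Z : MvPolynomial (Fin n) ℤ := Gδ * Gδ * (Bδ * Bδ) * P with hZ
  have hZ_ne : Z ≠ 0 := by
    rw [hZ]
    exact mul_ne_zero (mul_ne_zero (mul_ne_zero hGδ_ne hGδ_ne)
      (mul_ne_zero hBδ_ne hBδ_ne)) hP_ne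
  have hgoalLHS : (MvPolynomial.aeval
      (fun j : Fin (n + 1) =>
        if h : (j : ℕ) < n then (X ⟨(j : ℕ), h⟩ : MvPolynomial (Fin n) ℤ) else 1)
      (p * q) : MvPolynomial (Fin n) ℤ) = φ p * φ q := by
    rw [show (fun j : Fin (n + 1) =>
        if h : (j : ℕ) < n then (X ⟨(j : ℕ), h⟩ : MvPolynomial (Fin n) ℤ) else 1) = g from rfl]
    exact map_mul φ p q
  rw [hgoalLHS, hgoalRHS]
  apply mul_right_cancel₀ hZ_ne
  have hleft : φ p * φ q * Z = D * M * Gδ * W * (Bδ * Bδ) * P := by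
    calc φ p * φ q * Z = (φ p * Gδ) * (φ q * Gδ) * (Bδ * Bδ) * P := by rw [hZ]; ring
      _ = G lam * G (fun j => 2 * (n - (j:ℕ))) * (Bδ * Bδ) * P := by rw [hA, hBq]
      _ = G lam * (Gδ * (W * P)) * (Bδ * Bδ) * P := by rw [hL1]
      _ = (G lam * P) * Gδ * W * (Bδ * Bδ) * P := by ring
      _ = (D * M) * Gδ * W * (Bδ * Bδ) * P := by rw [hC1]
      _ = D * M * Gδ * W * (Bδ * Bδ) * P := by ring
  have hright : (∑ ν ∈ sfin, ((2 : ℤ) ^ (Finset.univ.filter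
        (fun i : Fin n => lam i.succ < ν i ∧ ν i < lam i.castSucc)).card) •
        (s (fun i => ν i - (n - 1 - (i : ℕ))) * s (fun i => n - 1 - (i : ℕ)))) * Z
      = D * M * Gδ * W * (Bδ * Bδ) * P := by
    rw [Finset.sum_mul]
    have hterm2 : ∀ ν ∈ sfin, (((2 : ℤ) ^ (Finset.univ.filter
          (fun i : Fin n => lam i.succ < ν i ∧ ν i < lam i.castSucc)).card) •
          (s (fun i => ν i - (n - 1 - (i : ℕ))) * s (fun i => n - 1 - (i : ℕ)))) * Z
        = ((2 : MvPolynomial (Fin n) ℤ) ^ (Finset.univ.filter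
            (fun i : Fin n => lam i.succ < ν i ∧ ν i < lam i.castSucc)).card * B ν)
          * (Bδ * W * (Gδ * Gδ) * P) := by
      intro ν hν
      rw [zsmul_eq_mul]
      push_cast
      calc (2 : MvPolynomial (Fin n) ℤ) ^ (Finset.univ.filter
            (fun i : Fin n => lam i.succ < ν i ∧ ν i < lam i.castSucc)).card *
            (s (fun i => ν i - (n - 1 - (i : ℕ))) * s (fun i => n - 1 - (i : ℕ))) * Z
          = (2 : MvPolynomial (Fin n) ℤ) ^ (Finset.univ.filter
            (fun i : Fin n => lam i.succ < ν i ∧ ν i < lam i.castSucc)).card *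
            ((s (fun i => ν i - (n - 1 - (i : ℕ))) * Bδ) *
              (s (fun i : Fin n => n - 1 - (i:ℕ)) * Bδ)) * (Gδ * Gδ * P) := by
            rw [hZ]; ring
        _ = (2 : MvPolynomial (Fin n) ℤ) ^ (Finset.univ.filter
            (fun i : Fin n => lam i.succ < ν i ∧ ν i < lam i.castSucc)).card *
            (B ν * (Bδ * W)) * (Gδ * Gδ * P) := by
            rw [hterm ν hν, hsδ, hL2]
        _ = ((2 : MvPolynomial (Fin n) ℤ) ^ (Finset.univ.filter
            (fun i : Fin n => lam i.succ < ν i ∧ ν i < lam i.castSucc)).card * B ν)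
            * (Bδ * W * (Gδ * Gδ) * P) := by ring
    rw [Finset.sum_congr rfl hterm2, ← Finset.sum_mul, ← hDsum2, ← hDsum]
    calc D * (Bδ * W * (Gδ * Gδ) * P)
        = D * (Bδ * W * (Gδ * (Bδ * M)) * P) := by rw [← hC2]
      _ = D * M * Gδ * W * (Bδ * Bδ) * P := by ring
  rw [hleft, hright]
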